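/- Let A be a commutative ring graded by an abelian group Γ via (B_γ)_{γ∈Γ}, such that A is either an order or a finite-dimensional commutative ℚ-algebra, and suppose A has no non-zero homogeneous nilpotent elements. Then: (i) if δ ∈ Γ has infinite order, then B_δ = 0; (ii) the subgroup of Γ generated by {γ : B_γ ≠ 0} is finite. -/

import Mathlib

/-- A `Γ`-grading of a commutative ring `A`: a family of additive subgroups
`B γ` with `B γ * B δ ⊆ B (γ*δ)` such that every element of `A` has a unique
finitely-supported decomposition into homogeneous components. -/
def IsGrading {A Γ : Type*} [CommRing A] [CommGroup Γ] (B : Γ → AddSubgroup A) : Prop :=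
  (∀ γ δ : Γ, ∀ x ∈ B γ, ∀ y ∈ B δ, x * y ∈ B (γ * δ)) ∧
  (∀ a : A, ∃! f : Γ →₀ A, (∀ γ, f γ ∈ B γ) ∧ f.sum (fun _ x => x) = a)


/-- If `A` is an order or a finite-dimensional commutative ℚ-algebra, graded by
an abelian group `Γ`, with no nonzero homogeneous nilpotents, then components
of degrees of infinite order vanish, and the subgroup generated by the support
of the grading is finite. -/
theorem grading_support_closure_finite {A Γ : Type} [CommRing A] [CommGroup Γ]
    (B : Γ → AddSubgroup A) (hB : IsGrading B)
    (hA : (Module.Free ℤ A ∧ Module.Finite ℤ A) ∨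
      (∃ inst : Algebra ℚ A, @Module.Finite ℚ A _ _ inst.toModule))
    (hnil : ∀ γ : Γ, ∀ x ∈ B γ, IsNilpotent x → x = 0) :
    (∀ δ : Γ, ¬ IsOfFinOrder δ → B δ = ⊥) ∧
      Finite (Subgroup.closure {γ : Γ | B γ ≠ ⊥}) := by
  classical
  obtain ⟨hmul, hdec⟩ := hB
  -- the zero element has only the trivial decomposition
  have hzero : ∀ g : Γ →₀ A, (∀ γ, g γ ∈ B γ) → g.sum (fun _ x => x) = 0 → g = 0 := by
    intro g hg hs
    obtain ⟨f, -, hu⟩ := hdec 0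
    have h1 := hu g ⟨hg, hs⟩
    have h2 := hu 0 ⟨fun γ => (B γ).zero_mem, by simp⟩
    rw [h1, h2]
  -- A is torsion-free as a ℤ-module
  have htf : ∀ (n : ℤ) (x : A), n • x = 0 → n ≠ 0 → x = 0 := by
    rcases hA with ⟨hfree, _⟩ | ⟨inst, _⟩
    · intro n x h hn
      haveI := hfree
      exact (smul_eq_zero.mp h).resolve_left hn
    · intro n x h hn
      letI := inst
      have h' : ((n : ℚ)) • x = 0 := by rw [Int.cast_smul_eq_zsmul]; exact h
      have hn' : (n : ℚ) ≠ 0 := Int.cast_ne_zero.mpr hn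
      exact (smul_eq_zero.mp h').resolve_left hn'
  -- the support of the grading
  set S : Set Γ := {γ : Γ | B γ ≠ ⊥} with hSdef
  -- choose a nonzero homogeneous element in each supported degree
  have hex : ∀ γ : Γ, B γ ≠ ⊥ → ∃ x : A, x ∈ B γ ∧ x ≠ 0 := by
    intro γ hγ
    by_contra h
    push_neg at h
    exact hγ (by
      ext y
      simp only [AddSubgroup.mem_bot]
      exact ⟨fun hy => h y hy, fun hy => hy ▸ (B γ).zero_mem⟩)
  have hx : ∀ γ : S, ∃ x : A, x ∈ B (γ : Γ) ∧ x ≠ 0 := fun γ => hex γ γ.2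
  choose x hxB hx0 using hx
  -- this family is ℤ-linearly independent
  have hli : LinearIndependent ℤ x := by
    rw [linearIndependent_iff]
    intro l hl
    -- build the corresponding homogeneous decomposition of 0
    set e : S ↪ Γ := Function.Embedding.subtype _ with he
    set h : S →₀ A := Finsupp.onFinset l.support (fun i => l i • x i)
      (fun i hi => Finsupp.mem_support_iff.mpr (fun h0 => hi (show l i • x i = 0 by rw [h0, zero_smul]))) with hh
    set g : Γ →₀ A := h.embDomain e with hg
    have hgB : ∀ γ, g γ ∈ B γ := by
      intro γ
      by_cases hγ : γ ∈ S
      · have : g (e ⟨γ, hγ⟩) = h ⟨γ, hγ⟩ := Finsupp.embDomain_apply_self e h ⟨γ, hγ⟩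
        simp only [he, Function.Embedding.coe_subtype] at this
        rw [this]
        exact (B γ).zsmul_mem (hxB ⟨γ, hγ⟩) _
      · rw [Finsupp.embDomain_notin_range]
        · exact (B γ).zero_mem
        · rintro ⟨⟨γ', hγ'⟩, rfl⟩
          exact hγ hγ'
    have hgs : g.sum (fun _ x => x) = 0 := by
      rw [hg, Finsupp.sum_embDomain]
      rw [Finsupp.linearCombination_apply, Finsupp.sum] at hl
      rw [Finsupp.onFinset_sum _ (fun _ => rfl)]
      exact hl
    have hg0 := hzero g hgB hgs
    ext i
    have : g (e i) = h i := Finsupp.embDomain_apply_self e h i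
    rw [hg0] at this
    have h0 : l i • x i = 0 := this.symm
    have : l i = 0 := by_contra fun hne => hx0 i (htf (l i) (x i) h0 hne)
    simpa using this
  -- the support is finite
  have hSfin : S.Finite := by
    rcases hA with ⟨hfree, hfin⟩ | ⟨inst, hfin⟩
    · haveI := hfree; haveI := hfin
      haveI : Finite S := hli.finite_of_isNoetherian
      exact Set.toFinite S
    · letI := inst
      haveI := hfin
      haveI : IsScalarTower ℤ ℚ A := AddCommGroup.intIsScalarTower
      have hli' : LinearIndependent ℚ x := (LinearIndependent.iff_fractionRing ℤ ℚ).mp hli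
      haveI : Finite S := hli'.finite_of_isNoetherian
      exact Set.toFinite S
  -- part (i): infinite-order degrees vanish
  have part1 : ∀ δ : Γ, ¬ IsOfFinOrder δ → B δ = ⊥ := by
    intro δ hδ
    by_contra hne
    obtain ⟨y, hyB, hy0⟩ := hex δ hne
    -- powers of y are nonzero homogeneous elements of distinct degrees
    have hpow : ∀ n : ℕ, y ^ (n + 1) ∈ B (δ ^ (n + 1)) := by
      intro n
      induction n with
      | zero => simpa using hyB
      | succ k ih =>
        have := hmul (δ ^ (k + 1)) δ (y ^ (k + 1)) ih y hyB
        rw [← pow_succ, ← pow_succ] at this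
        exact this
    have hpow0 : ∀ n : ℕ, y ^ (n + 1) ≠ 0 := by
      intro n h0
      exact hy0 (hnil δ y hyB ⟨n + 1, h0⟩)
    have hmem : ∀ n : ℕ, δ ^ (n + 1) ∈ S := by
      intro n h0
      exact hpow0 n (by
        have := hpow n
        rw [h0] at this
        simpa using this)
    have hinj : Function.Injective (fun n : ℕ => δ ^ (n + 1)) := by
      have := injective_pow_iff_not_isOfFinOrder.mpr hδ
      intro a b hab
      exact Nat.succ_injective (this hab)
    exact (Set.infinite_of_injective_forall_mem hinj hmem) hSfin
  refine ⟨part1, ?_⟩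
  -- part (ii): the closure of the support is a f.g. torsion abelian group
  haveI : Finite S := hSfin.to_subtype
  haveI : Group.FG (Subgroup.closure S) := Group.closure_finite_fg S
  apply CommGroup.finite_of_fg_torsion
  intro z
  have hz : (z : Γ) ∈ CommGroup.torsion Γ := by
    have hle : Subgroup.closure S ≤ CommGroup.torsion Γ := by
      rw [Subgroup.closure_le]
      intro γ hγ
      simp only [SetLike.mem_coe]
      rw [CommGroup.mem_torsion]
      by_contra hfo
      exact hγ (part1 γ hfo)
    exact hle z.2
  rw [CommGroup.mem_torsion, isOfFinOrder_iff_pow_eq_one] at hz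
  obtain ⟨n, hn, hzn⟩ := hz
  rw [isOfFinOrder_iff_pow_eq_one]
  exact ⟨n, hn, by ext; push_cast; exact hzn⟩
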